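/- There exists exactly one compatible root graded anti-pre-Lie algebraic structure on sl₂(ℂ): namely, if ∘ is a bilinear operation on sl₂(ℂ) with h∘e = α₁e, e∘h = (α₁−2)e, h∘f = β₁f, f∘h = (β₁+2)f, e∘f = γ₁h, f∘e = (γ₁−1)h, h∘h = λ₁h, e∘e = f∘f = 0, satisfying the anti-pre-Lie identity x∘(y∘z) − y∘(x∘z) = [y,x]∘z, then necessarily α₁ = −2, β₁ = 2, γ₁ = 1/2, λ₁ = 0. -/

import Mathlib

/-- Uniqueness of the compatible root graded anti-pre-Lie algebraic
structure on `sl₂(ℂ)`: the constants are forced to be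
`α₁ = −2`, `β₁ = 2`, `γ₁ = 1/2`, `λ₁ = 0`. -/
theorem stmt4 {A : Type*} [AddCommGroup A] [Module ℂ A]
    (B : Module.Basis (Fin 3) ℂ A) (e f h : A)
    (he : e = B 0) (hf : f = B 1) (hh : h = B 2)
    (c : A →ₗ[ℂ] A →ₗ[ℂ] A)
    (α₁ β₁ γ₁ lam₁ : ℂ)
    (apl : ∀ x y z : A, c x (c y z) - c y (c x z) = c (c y x - c x y) z)
    (jac : ∀ x y z : A,
      (c (c x y - c y x) z - c z (c x y - c y x)) +
      (c (c y z - c z y) x - c x (c y z - c z y)) +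
      (c (c z x - c x z) y - c y (c z x - c x z)) = 0)
    (hhe : c h e = α₁ • e) (heh : c e h = (α₁ - 2) • e)
    (hhf : c h f = β₁ • f) (hfh : c f h = (β₁ + 2) • f)
    (hef : c e f = γ₁ • h) (hfe : c f e = (γ₁ - 1) • h)
    (hhh : c h h = lam₁ • h) (hee : c e e = 0) (hff : c f f = 0) :
    α₁ = -2 ∧ β₁ = 2 ∧ γ₁ = 1/2 ∧ lam₁ = 0 := by
  have key : ∀ v : A, v ≠ 0 → ∀ a b : ℂ, a • v = b • v → a = b := by
    intro v hv a b hab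
    have : (a - b) • v = 0 := by rw [sub_smul, hab, sub_self]
    rcases smul_eq_zero.mp this with h1 | h1
    · exact sub_eq_zero.mp h1
    · exact absurd h1 hv
  have hinj := key h (by rw [hh]; exact B.ne_zero 2)
  have einj := key e (by rw [he]; exact B.ne_zero 0)
  have finj := key f (by rw [hf]; exact B.ne_zero 1)
  -- E1 from apl h e f
  have E1 : γ₁ * lam₁ - β₁ * γ₁ = -2 * γ₁ := by
    have t := apl h e f
    simp only [hef, hhf, heh, hhe, map_smul, map_sub, LinearMap.sub_apply,
      LinearMap.smul_apply, hhh, smul_smul] at t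
    apply hinj
    linear_combination (norm := module) t
  -- E2 from apl h f e
  have E2 : (γ₁ - 1) * lam₁ - α₁ * (γ₁ - 1) = 2 * (γ₁ - 1) := by
    have t := apl h f e
    simp only [hfe, hhe, hfh, hhf, map_smul, map_sub, LinearMap.sub_apply,
      LinearMap.smul_apply, hhh, smul_smul] at t
    apply hinj
    linear_combination (norm := module) t
  -- E3 from apl e f e
  have E3 : (γ₁ - 1) * (α₁ - 2) = -α₁ := by
    have t := apl e f e
    simp only [hfe, heh, hee, hef, map_smul, map_sub, LinearMap.sub_apply,
      LinearMap.smul_apply, hhe, smul_smul, map_zero, sub_zero] at t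
    apply einj
    linear_combination (norm := module) t
  -- E4 from apl f e f
  have E4 : γ₁ * (β₁ + 2) = β₁ := by
    have t := apl f e f
    simp only [hef, hfh, hff, hfe, map_smul, map_sub, LinearMap.sub_apply,
      LinearMap.smul_apply, hhf, smul_smul, map_zero, sub_zero] at t
    apply finj
    linear_combination (norm := module) t
  -- solve the scalar system
  have hγ0 : γ₁ ≠ 0 := by
    intro h0
    have : (2:ℂ) = 0 := by linear_combination E3 - (α₁ - 2) * h0
    exact two_ne_zero this
  have hγ1 : γ₁ - 1 ≠ 0 := by
    intro h0
    have : (2:ℂ) = 0 := by linear_combination E4 - (β₁ + 2) * h0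
    exact two_ne_zero this
  have hl1 : lam₁ = β₁ - 2 := by
    apply mul_left_cancel₀ hγ0
    linear_combination E1
  have hl2 : lam₁ = α₁ + 2 := by
    apply mul_left_cancel₀ hγ1
    linear_combination E2
  have h4 : β₁ = α₁ + 4 := by linear_combination hl2 - hl1
  have hab : α₁ * β₁ = -4 := by
    have k : (γ₁ * (γ₁ - 1)) * (α₁ * β₁) = (γ₁ * (γ₁ - 1)) * (-4) := by
      linear_combination ((γ₁ - 1) * β₁) * E3 + (2 * (γ₁ - 1)) * E4
    exact mul_left_cancel₀ (mul_ne_zero hγ0 hγ1) k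
  have hα : α₁ = -2 := by
    have hsq : (α₁ + 2) ^ 2 = 0 := by linear_combination hab - α₁ * h4
    have := pow_eq_zero_iff (n := 2) (by norm_num) |>.mp hsq
    linear_combination this
  have hβ : β₁ = 2 := by linear_combination h4 + hα
  have hlam : lam₁ = 0 := by rw [hl2, hα]; ring
  have hγ : γ₁ = 1/2 := by
    linear_combination (-1/4 : ℂ) * E3 + (γ₁/4) * hα
  exact ⟨hα, hβ, hγ, hlam⟩
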